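/- If f : ℝ → ℝ is C² and the map J ↦ f(J) is Lipschitz with constant C on the set of self-adjoint operators of norm at most R, then the map J ↦ X_f(J) satisfies a Lipschitz condition ‖X_f(J) - X_f(J')‖ ≤ L ‖J - J'‖ for all Jacobi matrices J, J' with ‖J‖, ‖J'‖ ≤ R, where L depends only on C, R, and sup_{[-R,R]} |f|. -/

import Mathlib

open scoped ENNReal

noncomputable section

/-- ℓ²(ℤ) -/
abbrev H2 : Type := lp (fun _ : ℤ => ℂ) 2

/-- the standard unit vectors δ_n -/
noncomputable def delta (n : ℤ) : H2 := lp.single 2 n 1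

/-- matrix entries X_{jk} = ⟨δ_j, X δ_k⟩ -/
noncomputable def ent (X : H2 →L[ℂ] H2) (j k : ℤ) : ℂ := inner ℂ (delta j) (X (delta k))

/-- the entries of the anti-symmetric part `X_a` of an operator `X` -/
noncomputable def entA (X : H2 →L[ℂ] H2) (j k : ℤ) : ℂ :=
  if j < k then ent X j k else if k < j then -ent X j k else 0

/-- `J` is a Jacobi matrix with coefficients `a`, `b`. -/
def IsJacobi (J : H2 →L[ℂ] H2) (a b : ℤ → ℝ) : Prop :=
  (∀ n, 0 < a n) ∧ (∀ j k : ℤ, ent J j k =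
    if j = k then (b j : ℂ) else if k = j + 1 then (a j : ℂ)
      else if j = k + 1 then (a k : ℂ) else 0)

/-- the `(j,k)` matrix entry of the formal commutator `F_a J - J F_a` -/
noncomputable def commEnt (F : H2 →L[ℂ] H2) (a b : ℤ → ℝ) (j k : ℤ) : ℂ :=
  (entA F j (k - 1) * (a (k - 1) : ℂ) + entA F j k * (b k : ℂ)
      + entA F j (k + 1) * (a k : ℂ))
    - ((a (j - 1) : ℂ) * entA F (j - 1) k + (b j : ℂ) * entA F j k
      + (a j : ℂ) * entA F (j + 1) k)

/-! ### auxiliary lemmas -/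

lemma inner_delta (j : ℤ) (v : H2) : (inner ℂ (delta j) v : ℂ) = v j := by
  rw [delta, lp.inner_single_left]
  simp [RCLike.inner_apply]

lemma norm_delta (n : ℤ) : ‖delta n‖ = 1 := by
  have := lp.norm_single (p := 2) (E := fun _ : ℤ => ℂ) (by norm_num) n (1:ℂ)
  simpa [delta] using this

lemma ent_apply (X : H2 →L[ℂ] H2) (j k : ℤ) : ent X j k = (X (delta k)) j := by
  rw [ent, inner_delta]

lemma norm_ent_le (X : H2 →L[ℂ] H2) (j k : ℤ) : ‖ent X j k‖ ≤ ‖X‖ := by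
  calc ‖ent X j k‖ ≤ ‖delta j‖ * ‖X (delta k)‖ := norm_inner_le_norm _ _
  _ ≤ 1 * (‖X‖ * ‖delta k‖) := by
      rw [norm_delta]; gcongr; exact X.le_opNorm _
  _ = ‖X‖ := by rw [norm_delta]; ring

lemma ent_sub (X Y : H2 →L[ℂ] H2) (j k : ℤ) : ent (X - Y) j k = ent X j k - ent Y j k := by
  simp [ent, inner_sub_right]

lemma single_eq_smul (k : ℤ) (c : ℂ) : lp.single 2 k c = c • delta k := by
  apply Subtype.ext
  funext j
  by_cases h : j = k <;> simp [lp.single_apply, delta, h]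

lemma hasSum_apply (X : H2 →L[ℂ] H2) (u : H2) :
    HasSum (fun k => u k • X (delta k)) (X u) := by
  have h := lp.hasSum_single (E := fun _ : ℤ => ℂ) ENNReal.ofNat_ne_top u
  have h2 : HasSum (fun k : ℤ => X (lp.single 2 k (u k))) (X u) := h.mapL X
  simpa [single_eq_smul, map_smul] using h2

lemma lp_ext {f g : H2} (h : ∀ j, (f : ∀ _ : ℤ, ℂ) j = g j) : f = g := Subtype.ext (funext h)

lemma ext_of_ent {X Y : H2 →L[ℂ] H2} (h : ∀ j k, ent X j k = ent Y j k) : X = Y := by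
  have hd : ∀ k, X (delta k) = Y (delta k) := by
    intro k
    apply lp_ext
    intro j
    rw [← ent_apply, ← ent_apply]; exact h j k
  apply ContinuousLinearMap.ext
  intro u
  exact (hasSum_apply X u).unique (by simpa [hd] using hasSum_apply Y u)

lemma ent_adjoint (X : H2 →L[ℂ] H2) (j k : ℤ) :
    ent (ContinuousLinearMap.adjoint X) j k = starRingEnd ℂ (ent X k j) := by
  rw [ent, ContinuousLinearMap.adjoint_inner_right, ent, ← inner_conj_symm]

lemma jacobi_selfAdjoint {J : H2 →L[ℂ] H2} {a b : ℤ → ℝ} (hJ : IsJacobi J a b) :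
    IsSelfAdjoint J := by
  rw [ContinuousLinearMap.isSelfAdjoint_iff']
  apply ext_of_ent
  intro j k
  rw [ent_adjoint, hJ.2 k j, hJ.2 j k]
  rcases eq_or_ne j k with h | h
  · simp [h]
  · rcases eq_or_ne k (j+1) with h2 | h2
    · have h3 : ¬ (j = j + 1 + 1) := by omega
      simp [h, h.symm, h2, h3, Complex.conj_ofReal]
    · rcases eq_or_ne j (k+1) with h3 | h3
      · have h4 : ¬ (k = k + 1 + 1) := by omega
        simp [h, h.symm, h2, h3, h4, Complex.conj_ofReal]
      · simp [h, h.symm, h2, h3]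

lemma two_toReal : (2 : ℝ≥0∞).toReal = 2 := by norm_num

lemma summable_sq (v : H2) : Summable (fun j : ℤ => ‖v j‖ ^ (2:ℝ)) := by
  have := (lp.memℓp v).summable (p := 2) (by norm_num)
  simpa [two_toReal] using this

lemma apply_coord (X : H2 →L[ℂ] H2) (h0 : ∀ j k : ℤ, ¬ |j - k| ≤ 1 → ent X j k = 0)
    (u : H2) (j : ℤ) :
    (X u) j = u (j-1) * ent X j (j-1) + u j * ent X j j + u (j+1) * ent X j (j+1) := by
  have h1 : HasSum (fun k : ℤ => (inner ℂ (delta j) (u k • X (delta k)) : ℂ))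
      (inner ℂ (delta j) (X u)) := (hasSum_apply X u).mapL (innerSL ℂ (delta j))
  have h2 : HasSum (fun k : ℤ => u k * ent X j k) ((X u) j) := by
    rw [← inner_delta]
    convert h1 using 2 with k
    rw [inner_smul_right, ent]
  have hs : HasSum (fun k : ℤ => u k * ent X j k)
      (∑ k ∈ ({j-1, j, j+1} : Finset ℤ), u k * ent X j k) := by
    apply hasSum_sum_of_ne_finset_zero
    intro k hk
    simp only [Finset.mem_insert, Finset.mem_singleton] at hk
    push_neg at hk
    rw [h0 j k (by rw [abs_le]; omega), mul_zero]
  have := h2.unique hs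
  rw [this]
  rw [show ({j-1, j, j+1} : Finset ℤ) = insert (j-1) (insert j {j+1}) from rfl]
  rw [Finset.sum_insert (by simp; try omega), Finset.sum_insert (by simp; try omega),
    Finset.sum_singleton]
  ring

lemma mem_shift (g : ℤ → ℂ) (c : ℝ) (hc : 0 ≤ c) (v : H2) (m : ℤ)
    (h : ∀ j, ‖g j‖ ≤ c * ‖v (j + m)‖) : Memℓp g 2 := by
  apply memℓp_gen
  rw [two_toReal]
  have hsum : Summable (fun j : ℤ => (c * ‖v (j + m)‖) ^ (2:ℝ)) := by
    have h1 : Summable (fun j : ℤ => ‖v j‖ ^ (2:ℝ)) := summable_sq v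
    have h2 : Summable (fun j : ℤ => ‖v (j + m)‖ ^ (2:ℝ)) :=
      ((Equiv.addRight m).summable_iff (f := fun j : ℤ => ‖v j‖ ^ (2:ℝ))).mpr h1
    have := h2.mul_left (c ^ (2:ℝ))
    refine this.congr (fun j => ?_)
    rw [Real.mul_rpow (by positivity) (norm_nonneg _)]
  apply Summable.of_nonneg_of_le (fun j => by positivity) (fun j => ?_) hsum
  apply Real.rpow_le_rpow (norm_nonneg _) (h j) (by norm_num)

lemma norm_le_shift (g : H2) (c : ℝ) (hc : 0 ≤ c) (v : H2) (m : ℤ)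
    (h : ∀ j, ‖g j‖ ≤ c * ‖v (j + m)‖) : ‖g‖ ≤ c * ‖v‖ := by
  have hp : (0:ℝ) < (2 : ℝ≥0∞).toReal := by norm_num
  have hg := lp.norm_rpow_eq_tsum hp g
  have hv := lp.norm_rpow_eq_tsum hp v
  rw [two_toReal] at hg hv
  have key : ‖g‖ ^ (2:ℝ) ≤ (c * ‖v‖) ^ (2:ℝ) := by
    rw [hg, Real.mul_rpow hc (norm_nonneg _), hv, ← tsum_mul_left]
    have hshift : Summable (fun j : ℤ => c ^ (2:ℝ) * ‖v (j + m)‖ ^ (2:ℝ)) :=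
      (((Equiv.addRight m).summable_iff
        (f := fun j : ℤ => ‖v j‖ ^ (2:ℝ))).mpr (summable_sq v)).mul_left _
    calc ∑' j : ℤ, ‖g j‖ ^ (2:ℝ) ≤ ∑' j : ℤ, c ^ (2:ℝ) * ‖v (j+m)‖ ^ (2:ℝ) := by
          apply (summable_sq g).tsum_le_tsum ?_ hshift
          intro j
          calc ‖g j‖ ^ (2:ℝ) ≤ (c * ‖v (j + m)‖) ^ (2:ℝ) :=
              Real.rpow_le_rpow (norm_nonneg _) (h j) (by norm_num)
          _ = c ^ (2:ℝ) * ‖v (j+m)‖ ^ (2:ℝ) := Real.mul_rpow hc (norm_nonneg _)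
      _ = ∑' j : ℤ, c ^ (2:ℝ) * ‖v j‖ ^ (2:ℝ) :=
          (Equiv.addRight m).tsum_eq (fun n : ℤ => c ^ (2:ℝ) * ‖v n‖ ^ (2:ℝ))
  have key2 : ‖g‖ ^ 2 ≤ (c * ‖v‖) ^ 2 := by
    rw [← Real.rpow_natCast ‖g‖ 2, ← Real.rpow_natCast (c * ‖v‖) 2]
    exact_mod_cast key
  have h3 := Real.sqrt_le_sqrt key2
  rwa [Real.sqrt_sq (norm_nonneg g), Real.sqrt_sq (mul_nonneg hc (norm_nonneg v))] at h3

lemma tri_bound (X : H2 →L[ℂ] H2) (ε : ℝ) (hε : 0 ≤ ε)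
    (h0 : ∀ j k : ℤ, ¬ |j - k| ≤ 1 → ent X j k = 0)
    (hb : ∀ j k : ℤ, ‖ent X j k‖ ≤ ε) : ‖X‖ ≤ 3 * ε := by
  apply ContinuousLinearMap.opNorm_le_bound _ (by positivity)
  intro u
  have bA : ∀ j : ℤ, ‖u (j-1) * ent X j (j-1)‖ ≤ ε * ‖u (j + (-1))‖ := by
    intro j
    rw [show j + (-1) = j - 1 by ring, norm_mul, mul_comm]
    exact mul_le_mul (hb j (j-1)) le_rfl (norm_nonneg _) hε
  have bB : ∀ j : ℤ, ‖u j * ent X j j‖ ≤ ε * ‖u (j + 0)‖ := by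
    intro j
    rw [show j + 0 = j by ring, norm_mul, mul_comm]
    exact mul_le_mul (hb j j) le_rfl (norm_nonneg _) hε
  have bC : ∀ j : ℤ, ‖u (j+1) * ent X j (j+1)‖ ≤ ε * ‖u (j + 1)‖ := by
    intro j
    rw [norm_mul, mul_comm]
    exact mul_le_mul (hb j (j+1)) le_rfl (norm_nonneg _) hε
  set A : H2 := ⟨fun j => u (j-1) * ent X j (j-1), mem_shift _ ε hε u (-1) bA⟩ with hA
  set B : H2 := ⟨fun j => u j * ent X j j, mem_shift _ ε hε u 0 bB⟩ with hB
  set Cv : H2 := ⟨fun j => u (j+1) * ent X j (j+1), mem_shift _ ε hε u 1 bC⟩ with hC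
  have hXu : X u = A + B + Cv := by
    apply lp_ext
    intro j
    rw [apply_coord X h0 u j]
    rfl
  rw [hXu]
  calc ‖A + B + Cv‖ ≤ ‖A‖ + ‖B‖ + ‖Cv‖ := norm_add₃_le
  _ ≤ ε * ‖u‖ + ε * ‖u‖ + ε * ‖u‖ := by
      gcongr <;>
        [exact norm_le_shift A ε hε u (-1) bA; exact norm_le_shift B ε hε u 0 bB;
          exact norm_le_shift Cv ε hε u 1 bC]
  _ = 3 * ε * ‖u‖ := by ring
lemma entA_bound (X : H2 →L[ℂ] H2) (j k : ℤ) : ‖entA X j k‖ ≤ ‖X‖ := by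
  unfold entA
  split_ifs
  · exact norm_ent_le X j k
  · rw [norm_neg]; exact norm_ent_le X j k
  · rw [norm_zero]; exact norm_nonneg X

lemma entA_sub_bound (X Y : H2 →L[ℂ] H2) (j k : ℤ) :
    ‖entA X j k - entA Y j k‖ ≤ ‖X - Y‖ := by
  unfold entA
  split_ifs
  · rw [← ent_sub]; exact norm_ent_le _ j k
  · rw [show -ent X j k - -ent Y j k = -(ent (X - Y) j k) by rw [ent_sub]; ring, norm_neg]
    exact norm_ent_le _ j k
  · rw [sub_zero, norm_zero]; exact norm_nonneg (X - Y)

lemma prod_diff {x x' y y' : ℂ} {c m r d : ℝ} (hx : ‖x - x'‖ ≤ c) (hx' : ‖x'‖ ≤ m)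
    (hy : ‖y‖ ≤ r) (hyd : ‖y - y'‖ ≤ d) : ‖x * y - x' * y'‖ ≤ c * r + m * d := by
  have e : x * y - x' * y' = (x - x') * y + x' * (y - y') := by ring
  rw [e]
  refine (norm_add_le _ _).trans ?_
  rw [norm_mul, norm_mul]
  exact add_le_add (mul_le_mul hx hy (norm_nonneg _) ((norm_nonneg _).trans hx))
    (mul_le_mul hx' hyd (norm_nonneg _) ((norm_nonneg _).trans hx'))

lemma commEnt_diff {F F' : H2 →L[ℂ] H2} {a b a' b' : ℤ → ℝ} {cd mb rb d : ℝ}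
    (hd : ‖F - F'‖ ≤ cd) (hm : ‖F‖ ≤ mb) (hm' : ‖F'‖ ≤ mb)
    (haR : ∀ n, ‖((a n : ℝ) : ℂ)‖ ≤ rb) (haR' : ∀ n, ‖((a' n : ℝ) : ℂ)‖ ≤ rb)
    (hbR : ∀ n, ‖((b n : ℝ) : ℂ)‖ ≤ rb) (hbR' : ∀ n, ‖((b' n : ℝ) : ℂ)‖ ≤ rb)
    (haD : ∀ n, ‖((a n : ℝ) : ℂ) - ((a' n : ℝ) : ℂ)‖ ≤ d)
    (hbD : ∀ n, ‖((b n : ℝ) : ℂ) - ((b' n : ℝ) : ℂ)‖ ≤ d) (j k : ℤ) :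
    ‖commEnt F a b j k - commEnt F' a' b' j k‖
      ≤ 3 * (cd * rb + mb * d) + 3 * (d * mb + rb * cd) := by
  have t1 : ∀ p q n, ‖entA F p q * ((a n : ℝ) : ℂ) - entA F' p q * ((a' n : ℝ) : ℂ)‖
      ≤ cd * rb + mb * d := fun p q n =>
    prod_diff ((entA_sub_bound F F' p q).trans hd) ((entA_bound F' p q).trans hm')
      (haR n) (haD n)
  have t2 : ∀ p q n, ‖entA F p q * ((b n : ℝ) : ℂ) - entA F' p q * ((b' n : ℝ) : ℂ)‖
      ≤ cd * rb + mb * d := fun p q n =>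
    prod_diff ((entA_sub_bound F F' p q).trans hd) ((entA_bound F' p q).trans hm')
      (hbR n) (hbD n)
  have t3 : ∀ p q n, ‖((a n : ℝ) : ℂ) * entA F p q - ((a' n : ℝ) : ℂ) * entA F' p q‖
      ≤ d * mb + rb * cd := fun p q n =>
    prod_diff (haD n) (haR' n) ((entA_bound F p q).trans hm)
      ((entA_sub_bound F F' p q).trans hd)
  have t4 : ∀ p q n, ‖((b n : ℝ) : ℂ) * entA F p q - ((b' n : ℝ) : ℂ) * entA F' p q‖
      ≤ d * mb + rb * cd := fun p q n =>
    prod_diff (hbD n) (hbR' n) ((entA_bound F p q).trans hm)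
      ((entA_sub_bound F F' p q).trans hd)
  have e : commEnt F a b j k - commEnt F' a' b' j k =
      ((entA F j (k-1) * ((a (k-1) : ℝ) : ℂ) - entA F' j (k-1) * ((a' (k-1) : ℝ) : ℂ))
        + (entA F j k * ((b k : ℝ) : ℂ) - entA F' j k * ((b' k : ℝ) : ℂ))
        + (entA F j (k+1) * ((a k : ℝ) : ℂ) - entA F' j (k+1) * ((a' k : ℝ) : ℂ)))
      - ((((a (j-1) : ℝ) : ℂ) * entA F (j-1) k - ((a' (j-1) : ℝ) : ℂ) * entA F' (j-1) k)
        + (((b j : ℝ) : ℂ) * entA F j k - ((b' j : ℝ) : ℂ) * entA F' j k)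
        + (((a j : ℝ) : ℂ) * entA F (j+1) k - ((a' j : ℝ) : ℂ) * entA F' (j+1) k)) := by
    rw [commEnt, commEnt]; ring
  rw [e]
  refine (norm_sub_le _ _).trans ?_
  have h1 := le_trans norm_add₃_le
    (add_le_add (add_le_add (t1 j (k-1) (k-1)) (t2 j k k)) (t1 j (k+1) k))
  have h2 := le_trans norm_add₃_le
    (add_le_add (add_le_add (t3 (j-1) k (j-1)) (t4 j k j)) (t3 (j+1) k j))
  have := add_le_add h1 h2
  linarith
/-- If `f` is `C²` and the operator function `Φ : J ↦ f(J)` is Lipschitz with constant `C`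
on the self-adjoint operators of norm `≤ R` (and bounded there by `M = sup_{[-R,R]}|f|`),
then the tridiagonal commutator map `Ξ : J ↦ X_f(J)` obeys a Lipschitz condition
`‖X_f(J) - X_f(J')‖ ≤ L ‖J - J'‖` on Jacobi matrices of norm `≤ R`. -/
theorem stmt2 (f : ℝ → ℝ) (hf : ContDiff ℝ 2 f) (C R M : ℝ)
    (hM : ∀ x ∈ Set.Icc (-R) R, |f x| ≤ M)
    (Φ : (H2 →L[ℂ] H2) → (H2 →L[ℂ] H2))
    (hΦlip : ∀ J J' : H2 →L[ℂ] H2, IsSelfAdjoint J → IsSelfAdjoint J' →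
      ‖J‖ ≤ R → ‖J'‖ ≤ R → ‖Φ J - Φ J'‖ ≤ C * ‖J - J'‖)
    (hΦbd : ∀ J : H2 →L[ℂ] H2, IsSelfAdjoint J → ‖J‖ ≤ R → ‖Φ J‖ ≤ M)
    (Ξ : (H2 →L[ℂ] H2) → (H2 →L[ℂ] H2))
    (hΞ : ∀ (J : H2 →L[ℂ] H2) (a b : ℤ → ℝ), IsJacobi J a b → ‖J‖ ≤ R →
      ∀ j k : ℤ, ent (Ξ J) j k =
        if |j - k| ≤ 1 then commEnt (Φ J) a b j k else 0) :
    ∃ L : ℝ, ∀ (J J' : H2 →L[ℂ] H2) (a b a' b' : ℤ → ℝ),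
      IsJacobi J a b → IsJacobi J' a' b' → ‖J‖ ≤ R → ‖J'‖ ≤ R →
      ‖Ξ J - Ξ J'‖ ≤ L * ‖J - J'‖ := by
  refine ⟨18 * (C * R + M), ?_⟩
  intro J J' a b a' b' hJ hJ' hJR hJ'R
  have hsa := jacobi_selfAdjoint hJ
  have hsa' := jacobi_selfAdjoint hJ'
  have aent : ∀ n : ℤ, ((a n : ℝ) : ℂ) = ent J n (n+1) := by
    intro n
    rw [hJ.2]
    have h1 : ¬ (n = n + 1) := by omega
    simp [h1]
  have a'ent : ∀ n : ℤ, ((a' n : ℝ) : ℂ) = ent J' n (n+1) := by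
    intro n
    rw [hJ'.2]
    have h1 : ¬ (n = n + 1) := by omega
    simp [h1]
  have bent : ∀ n : ℤ, ((b n : ℝ) : ℂ) = ent J n n := by
    intro n; rw [hJ.2]; simp
  have b'ent : ∀ n : ℤ, ((b' n : ℝ) : ℂ) = ent J' n n := by
    intro n; rw [hJ'.2]; simp
  have haR : ∀ n, ‖((a n : ℝ) : ℂ)‖ ≤ R := fun n => by
    rw [aent n]; exact (norm_ent_le J n (n+1)).trans hJR
  have haR' : ∀ n, ‖((a' n : ℝ) : ℂ)‖ ≤ R := fun n => by
    rw [a'ent n]; exact (norm_ent_le J' n (n+1)).trans hJ'R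
  have hbR : ∀ n, ‖((b n : ℝ) : ℂ)‖ ≤ R := fun n => by
    rw [bent n]; exact (norm_ent_le J n n).trans hJR
  have hbR' : ∀ n, ‖((b' n : ℝ) : ℂ)‖ ≤ R := fun n => by
    rw [b'ent n]; exact (norm_ent_le J' n n).trans hJ'R
  have haD : ∀ n, ‖((a n : ℝ) : ℂ) - ((a' n : ℝ) : ℂ)‖ ≤ ‖J - J'‖ := fun n => by
    rw [aent n, a'ent n, ← ent_sub]; exact norm_ent_le _ _ _
  have hbD : ∀ n, ‖((b n : ℝ) : ℂ) - ((b' n : ℝ) : ℂ)‖ ≤ ‖J - J'‖ := fun n => by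
    rw [bent n, b'ent n, ← ent_sub]; exact norm_ent_le _ _ _
  have hlip := hΦlip J J' hsa hsa' hJR hJ'R
  have hm := hΦbd J hsa hJR
  have hm' := hΦbd J' hsa' hJ'R
  have hR0 : 0 ≤ R := (norm_nonneg _).trans (haR 0)
  have hM0 : 0 ≤ M := (norm_nonneg _).trans hm
  have hCd0 : 0 ≤ C * ‖J - J'‖ := (norm_nonneg _).trans hlip
  have hD0 : (0:ℝ) ≤ ‖J - J'‖ := norm_nonneg _
  have hε0 : 0 ≤ 6 * (C * R + M) * ‖J - J'‖ := by nlinarith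
  have h0 : ∀ j k : ℤ, ¬ |j - k| ≤ 1 → ent (Ξ J - Ξ J') j k = 0 := by
    intro j k hjk
    rw [ent_sub, hΞ J a b hJ hJR, hΞ J' a' b' hJ' hJ'R, if_neg hjk, if_neg hjk, sub_zero]
  have hb2 : ∀ j k : ℤ, ‖ent (Ξ J - Ξ J') j k‖ ≤ 6 * (C * R + M) * ‖J - J'‖ := by
    intro j k
    rw [ent_sub, hΞ J a b hJ hJR, hΞ J' a' b' hJ' hJ'R]
    by_cases hjk : |j - k| ≤ 1
    · rw [if_pos hjk, if_pos hjk]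
      have := commEnt_diff (cd := C * ‖J - J'‖) (mb := M) (rb := R) (d := ‖J - J'‖)
        hlip hm hm' haR haR' hbR hbR' haD hbD j k
      calc ‖commEnt (Φ J) a b j k - commEnt (Φ J') a' b' j k‖
          ≤ 3 * (C * ‖J - J'‖ * R + M * ‖J - J'‖)
            + 3 * (‖J - J'‖ * M + R * (C * ‖J - J'‖)) := this
        _ = 6 * (C * R + M) * ‖J - J'‖ := by ring
    · rw [if_neg hjk, if_neg hjk, sub_zero, norm_zero]
      exact hε0
  calc ‖Ξ J - Ξ J'‖ ≤ 3 * (6 * (C * R + M) * ‖J - J'‖) :=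
      tri_bound (Ξ J - Ξ J') _ hε0 h0 hb2
    _ = 18 * (C * R + M) * ‖J - J'‖ := by ring
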